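/- Let a, b, q be real random variables on a probability space with a ≥ 0, b ≥ 0, a·b = 0 almost surely, q ≥ 0 almost surely, the pair (a, b) independent of q, all second moments finite, 0 < E[a] < E[b], and set ξ = E[a]/E[b]. Assume the stationarity condition that max(q + a − b, 0) has the same distribution as q. Then the mean queue length satisfies E[q] ≤ (1/2)·( E[a²] + ξ·(2−ξ)·E[b²] ) / ( E[b] − E[a] ), and consequently the average delay E[q]/E[a] satisfies E[q]/E[a] ≤ (1/2)·(1/E[a])·( E[a²] + ξ·(2−ξ)·E[b²] ) / ( E[b] − E[a] ). (Theorem 8: upper bound on the average queue size and average delay of buffer-aided relaying with starved buffer, where a = (1−d)S is the per-slot arrival into the buffer, b = d·R is the per-slot potential departure, and ξ < 1 because the decision threshold is chosen as ρ < ρ_opt.) -/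

import Mathlib

open MeasureTheory ProbabilityTheory

/-- Sorted case of the key pointwise inequality. -/
lemma T_sorted {x y z p q r : ℝ} (hx : 0 ≤ x) (hxy : x ≤ y) (hyz : y ≤ z)
    (hp : 0 ≤ p) (hq : 0 ≤ q) (hr : 0 ≤ r)
    (h1 : p * y ≤ q * x) (h2 : q * z ≤ r * y) (h3 : p * z ≤ r * x) :
    p*q*z^2 + q*r*x^2 + r*p*y^2 ≤ p^2*(y*z) + q^2*(z*x) + r^2*(x*y) := by
  have hy : 0 ≤ y := le_trans hx hxy
  have hz : 0 ≤ z := le_trans hy hyz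
  rcases eq_or_lt_of_le hx with hx0 | hx0
  · -- x = 0
    have hpy : p * y = 0 := le_antisymm (by nlinarith) (by positivity)
    have hpz : p * z = 0 := le_antisymm (by nlinarith) (by positivity)
    have e1 : p*q*z^2 = (q*z)*(p*z) := by ring
    have e2 : r*p*y^2 = (r*y)*(p*y) := by ring
    have e3 : q*r*x^2 = 0 := by rw [← hx0]; ring
    rw [e1, e2, e3, hpy, hpz]
    have : (0:ℝ) ≤ p^2*(y*z) + q^2*(z*x) + r^2*(x*y) := by
      rw [← hx0]; positivity
    linarith
  · have hy0 : 0 < y := lt_of_lt_of_le hx0 hxy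
    have hz0 : 0 < z := lt_of_lt_of_le hy0 hyz
    set A := p / x with hA
    set B := q / y with hB
    set C := r / z with hC
    have hpA : p = A * x := by rw [hA, div_mul_cancel₀ p hx0.ne']
    have hqB : q = B * y := by rw [hB, div_mul_cancel₀ q hy0.ne']
    have hrC : r = C * z := by rw [hC, div_mul_cancel₀ r hz0.ne']
    have hA0 : 0 ≤ A := by positivity
    have hB0 : 0 ≤ B := by positivity
    have hC0 : 0 ≤ C := by positivity
    have hAB : A ≤ B := by
      rw [hA, hB, div_le_div_iff₀ hx0 hy0]; linarith
    have hBC : B ≤ C := by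
      rw [hB, hC, div_le_div_iff₀ hy0 hz0]; linarith
    have c1 : 0 ≤ A^2+B^2+C^2 - A*B - B*C - C*A := by
      nlinarith [sq_nonneg (A-B), sq_nonneg (B-C), sq_nonneg (A-C)]
    have c2 : 0 ≤ B*(B-A) + C*(C-A) := by nlinarith
    have c3 : 0 ≤ C^2 - A*B := by nlinarith
    have key : 0 ≤ x*(A^2+B^2+C^2 - A*B - B*C - C*A) + (y-x)*(B*(B-A) + C*(C-A))
        + (z-y)*(C^2 - A*B) :=
      add_nonneg (add_nonneg (mul_nonneg hx0.le c1) (mul_nonneg (by linarith) c2))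
        (mul_nonneg (by linarith) c3)
    have expand : p^2*(y*z) + q^2*(z*x) + r^2*(x*y) - (p*q*z^2 + q*r*x^2 + r*p*y^2)
        = x*y*z*(x*(A^2+B^2+C^2 - A*B - B*C - C*A) + (y-x)*(B*(B-A) + C*(C-A))
            + (z-y)*(C^2 - A*B)) := by
      rw [hpA, hqB, hrC]; ring
    have hfin : 0 ≤ x*y*z*(x*(A^2+B^2+C^2 - A*B - B*C - C*A) + (y-x)*(B*(B-A) + C*(C-A))
            + (z-y)*(C^2 - A*B)) :=
      mul_nonneg (mul_nonneg (mul_nonneg hx0.le hy0.le) hz0.le) key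
    linarith [expand, hfin]

/-- Symmetric version for a ratio-monotone nonnegative function. -/
lemma T_nonneg (f : ℝ → ℝ) (hf0 : ∀ t, 0 ≤ f t)
    (hr : ∀ s t, 0 ≤ s → s ≤ t → f s * t ≤ f t * s)
    {x y z : ℝ} (hx : 0 ≤ x) (hy : 0 ≤ y) (hz : 0 ≤ z) :
    f x * f y * z^2 + f y * f z * x^2 + f z * f x * y^2
      ≤ (f x)^2*(y*z) + (f y)^2*(z*x) + (f z)^2*(x*y) := by
  rcases le_total x y with h1 | h1 <;> rcases le_total y z with h2 | h2 <;>
    rcases le_total x z with h3 | h3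
  · nlinarith [T_sorted hx h1 h2 (hf0 x) (hf0 y) (hf0 z) (hr x y hx h1) (hr y z hy h2) (hr x z hx h3)]
  · nlinarith [T_sorted hx h1 h2 (hf0 x) (hf0 y) (hf0 z) (hr x y hx h1) (hr y z hy h2) (hr x z hx (le_trans h1 h2))]
  · nlinarith [T_sorted hx h3 h2 (hf0 x) (hf0 z) (hf0 y) (hr x z hx h3) (hr z y hz h2) (hr x y hx h1)]
  · nlinarith [T_sorted hz h3 h1 (hf0 z) (hf0 x) (hf0 y) (hr z x hz h3) (hr x y hx h1) (hr z y hz h2)]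
  · nlinarith [T_sorted hy h1 h3 (hf0 y) (hf0 x) (hf0 z) (hr y x hy h1) (hr x z hx h3) (hr y z hy h2)]
  · nlinarith [T_sorted hy h2 h3 (hf0 y) (hf0 z) (hf0 x) (hr y z hy h2) (hr z x hz h3) (hr y x hy h1)]
  · nlinarith [T_sorted hz h2 h1 (hf0 z) (hf0 y) (hf0 x) (hr z y hz h2) (hr y x hy h1) (hr z x hz (le_trans h2 h1))]
  · nlinarith [T_sorted hz h2 h1 (hf0 z) (hf0 y) (hf0 x) (hr z y hz h2) (hr y x hy h1) (hr z x hz h3)]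

lemma T_nonneg2 (f : ℝ → ℝ) (hf0 : ∀ t, 0 ≤ f t)
    (hr : ∀ s t, 0 ≤ s → s ≤ t → f s * t ≤ f t * s)
    {x y z : ℝ} (hx : 0 ≤ x) (hy : 0 ≤ y) (hz : 0 ≤ z) :
    0 ≤ ((f x) ^ 2 * (y * z) + x * ((f y) ^ 2 * z) + x * (y * (f z) ^ 2))
      - (f x * (f y * z ^ 2) + f x * (y ^ 2 * f z) + x ^ 2 * (f y * f z)) := by
  nlinarith [T_nonneg f hf0 hr hx hy hz]

/-- Jensen: on a probability space, `(∫ Z)² ≤ ∫ Z²`. -/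
lemma sq_int_le {Ω : Type*} [MeasurableSpace Ω] {μ : Measure Ω} [IsProbabilityMeasure μ]
    {Z : Ω → ℝ} (h1 : Integrable Z μ) (h2 : Integrable (fun ω => Z ω^2) μ) :
    (∫ ω, Z ω ∂μ)^2 ≤ ∫ ω, Z ω^2 ∂μ := by
  set c := ∫ ω, Z ω ∂μ with hc
  have h4 : 0 ≤ ∫ ω, (Z ω - c)^2 ∂μ := integral_nonneg fun ω => sq_nonneg _
  have h5 : ∫ ω, (Z ω - c)^2 ∂μ = (∫ ω, Z ω^2 ∂μ) - c^2 := by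
    have e : (fun ω => (Z ω - c)^2) = fun ω => Z ω^2 - 2*c*Z ω + c^2 := by
      funext ω; ring
    have hfi : Integrable (fun ω => Z ω^2 - 2*c*Z ω) μ := h2.sub (h1.const_mul (2*c))
    have hci : Integrable (fun _ : Ω => c^2) μ := integrable_const _
    rw [e, integral_add hfi hci, integral_sub h2 (h1.const_mul (2*c)),
      integral_const_mul, integral_const]
    simp [measure_univ]
    ring
  linarith

/-- From a square-integrable (a.e. strongly measurable) function on a finite measure,
integrability. -/
lemma int_of_sq {Ω : Type*} [MeasurableSpace Ω] {μ : Measure Ω} [IsFiniteMeasure μ]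
    {u : Ω → ℝ} (hu : AEStronglyMeasurable u μ) (h2 : Integrable (fun ω => u ω^2) μ) :
    Integrable u μ := by
  have hg : Integrable (fun ω => 1 + u ω^2) μ := (integrable_const 1).add h2
  exact Integrable.mono' hg hu
    (ae_of_all _ fun ω => by
      rw [Real.norm_eq_abs]
      nlinarith [sq_nonneg (|u ω| - 1), sq_abs (u ω)])

set_option maxHeartbeats 2000000 in
/-- **Theorem 8** (upper bound on the average queue size and average delay of
buffer-aided relaying with starved buffer). Let `a = (1−d)S` be the per-slot
arrival into the relay's buffer and `b = dR` the per-slot potential departure,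
with `a, b ≥ 0`, `a·b = 0` a.s., the pair `(a,b)` independent of the
stationary queue length `q ≥ 0`, all second moments finite,
`0 < E[a] < E[b]`, `ξ = E[a]/E[b]`, and `max(q + a − b, 0)` distributed as
`q`. Then `E[q] ≤ (1/2)(E[a²] + ξ(2−ξ)E[b²])/(E[b] − E[a])` and the average
delay satisfies
`E[q]/E[a] ≤ (1/2)(1/E[a])(E[a²] + ξ(2−ξ)E[b²])/(E[b] − E[a])`. -/
theorem starved_buffer_delay_bound
    {Ω : Type*} [MeasurableSpace Ω] (P : Measure Ω) [IsProbabilityMeasure P]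
    (a b q : Ω → ℝ) (ha : Measurable a) (hb : Measurable b) (hq : Measurable q)
    (ha0 : ∀ᵐ ω ∂P, 0 ≤ a ω) (hb0 : ∀ᵐ ω ∂P, 0 ≤ b ω)
    (hab : ∀ᵐ ω ∂P, a ω * b ω = 0)
    (hq0 : ∀ᵐ ω ∂P, 0 ≤ q ω)
    (hindep : IndepFun (fun ω => (a ω, b ω)) q P)
    (ha2 : Integrable (fun ω => a ω ^ 2) P)
    (hb2 : Integrable (fun ω => b ω ^ 2) P)
    (hq2 : Integrable (fun ω => q ω ^ 2) P)
    (hEa : 0 < ∫ ω, a ω ∂P)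
    (hEab : (∫ ω, a ω ∂P) < ∫ ω, b ω ∂P)
    (ξ : ℝ) (hξ : ξ = (∫ ω, a ω ∂P) / ∫ ω, b ω ∂P)
    (hstat : P.map (fun ω => max (q ω + a ω - b ω) 0) = P.map q) :
    (∫ ω, q ω ∂P)
      ≤ (1 / 2) * ((∫ ω, a ω ^ 2 ∂P) + ξ * (2 - ξ) * ∫ ω, b ω ^ 2 ∂P)
          / ((∫ ω, b ω ∂P) - ∫ ω, a ω ∂P) ∧
    (∫ ω, q ω ∂P) / (∫ ω, a ω ∂P)
      ≤ (1 / 2) * (1 / ∫ ω, a ω ∂P)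
          * ((∫ ω, a ω ^ 2 ∂P) + ξ * (2 - ξ) * ∫ ω, b ω ^ 2 ∂P)
          / ((∫ ω, b ω ∂P) - ∫ ω, a ω ∂P) := by
  have hIq : Integrable q P := int_of_sq hq.aestronglyMeasurable hq2
  have hIa : Integrable a P := int_of_sq ha.aestronglyMeasurable ha2
  have hIb : Integrable b P := int_of_sq hb.aestronglyMeasurable hb2
  set W : Ω → ℝ := fun ω => b ω - a ω with hW_def
  have hWmeas : Measurable W := hb.sub ha
  have hIW : Integrable W P := by exact hIb.sub hIa
  have hsumab : Integrable (fun ω => a ω ^ 2 + b ω ^ 2) P := by exact ha2.add hb2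
  have hW2 : Integrable (fun ω => W ω ^ 2) P := by
    refine hsumab.congr ?_
    filter_upwards [hab] with ω h
    simp only [hW_def]
    linear_combination 2 * h
  set m : Ω → ℝ := fun ω => max (q ω + a ω - b ω) 0 with hm_def
  set L : Ω → ℝ := fun ω => max (b ω - a ω - q ω) 0 with hL_def
  have hmmeas : Measurable m := ((hq.add ha).sub hb).max measurable_const
  have hLmeas : Measurable L := ((hb.sub ha).sub hq).max measurable_const
  have hqW : Integrable (fun ω => q ω * W ω) P := by
    have hbd : Integrable (fun ω => q ω ^ 2 + W ω ^ 2) P := by exact hq2.add hW2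
    refine Integrable.mono' hbd (hq.mul hWmeas).aestronglyMeasurable
      (ae_of_all _ fun ω => ?_)
    rw [Real.norm_eq_abs, abs_mul]
    nlinarith [sq_nonneg (|q ω| - |W ω|), sq_abs (q ω), sq_abs (W ω), abs_nonneg (q ω),
      abs_nonneg (W ω)]
  have hx2 : Integrable (fun ω => (q ω + a ω - b ω) ^ 2) P := by
    have e : (fun ω => (q ω + a ω - b ω) ^ 2)
        = fun ω => q ω ^ 2 - 2 * (q ω * W ω) + W ω ^ 2 := by
      funext ω; simp only [hW_def]; ring
    rw [e]
    exact (hq2.sub (hqW.const_mul 2)).add hW2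
  have hIm2 : Integrable (fun ω => m ω ^ 2) P := by
    refine Integrable.mono' hx2 (hmmeas.pow_const 2).aestronglyMeasurable
      (ae_of_all _ fun ω => ?_)
    have h1 : (0:ℝ) ≤ m ω := le_max_right _ _
    have h2 : m ω ≤ |q ω + a ω - b ω| := max_le (le_abs_self _) (abs_nonneg _)
    rw [Real.norm_eq_abs, abs_of_nonneg (by positivity)]
    nlinarith [sq_abs (q ω + a ω - b ω)]
  have hIm : Integrable m P := int_of_sq hmmeas.aestronglyMeasurable hIm2
  have hIL2 : Integrable (fun ω => L ω ^ 2) P := by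
    refine Integrable.mono' hx2 (hLmeas.pow_const 2).aestronglyMeasurable
      (ae_of_all _ fun ω => ?_)
    have h1 : (0:ℝ) ≤ L ω := le_max_right _ _
    have h2 : L ω ≤ |b ω - a ω - q ω| := max_le (le_abs_self _) (abs_nonneg _)
    have h3 : |b ω - a ω - q ω| = |q ω + a ω - b ω| := by
      rw [show b ω - a ω - q ω = -(q ω + a ω - b ω) by ring, abs_neg]
    rw [Real.norm_eq_abs, abs_of_nonneg (by positivity)]
    nlinarith [sq_abs (q ω + a ω - b ω), abs_nonneg (q ω + a ω - b ω)]
  have hIL : Integrable L P := int_of_sq hLmeas.aestronglyMeasurable hIL2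
  -- stationarity
  have hEm : ∫ ω, m ω ∂P = ∫ ω, q ω ∂P := by
    have h1 : ∫ x, x ∂(P.map m) = ∫ ω, m ω ∂P :=
      integral_map hmmeas.aemeasurable aestronglyMeasurable_id
    have h2 : ∫ x, x ∂(P.map q) = ∫ ω, q ω ∂P :=
      integral_map hq.aemeasurable aestronglyMeasurable_id
    rw [← h1, ← h2, hstat]
  have hEm2 : ∫ ω, m ω ^ 2 ∂P = ∫ ω, q ω ^ 2 ∂P := by
    have h1 : ∫ x, x ^ 2 ∂(P.map m) = ∫ ω, m ω ^ 2 ∂P :=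
      integral_map hmmeas.aemeasurable (measurable_id.pow_const 2).aestronglyMeasurable
    have h2 : ∫ x, x ^ 2 ∂(P.map q) = ∫ ω, q ω ^ 2 ∂P :=
      integral_map hq.aemeasurable (measurable_id.pow_const 2).aestronglyMeasurable
    rw [← h1, ← h2, hstat]
  -- pointwise decompositions
  have hmL : ∀ ω, m ω = (q ω + a ω - b ω) + L ω := by
    intro ω
    simp only [hm_def, hL_def]
    rcases le_total (q ω + a ω - b ω) 0 with h | h
    · rw [max_eq_right h, max_eq_left (by linarith)]; ring
    · rw [max_eq_left h, max_eq_right (by linarith)]; ring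
  have hmL2 : ∀ ω, m ω ^ 2 = (q ω + a ω - b ω) ^ 2 - L ω ^ 2 := by
    intro ω
    simp only [hm_def, hL_def]
    rcases le_total (q ω + a ω - b ω) 0 with h | h
    · rw [max_eq_right h, max_eq_left (by linarith)]; ring
    · rw [max_eq_left h, max_eq_right (by linarith)]; ring
  -- first moment
  have hqab_int : Integrable (fun ω => q ω + a ω - b ω) P := by exact (hIq.add hIa).sub hIb
  have hEL : ∫ ω, L ω ∂P = (∫ ω, b ω ∂P) - ∫ ω, a ω ∂P := by
    have h1 : ∫ ω, m ω ∂P = ∫ ω, ((q ω + a ω - b ω) + L ω) ∂P :=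
      integral_congr_ae (ae_of_all _ fun ω => hmL ω)
    have h2 : ∫ ω, ((q ω + a ω - b ω) + L ω) ∂P
        = (∫ ω, (q ω + a ω - b ω) ∂P) + ∫ ω, L ω ∂P := integral_add hqab_int hIL
    have h3 : ∫ ω, (q ω + a ω - b ω) ∂P = (∫ ω, (q ω + a ω) ∂P) - ∫ ω, b ω ∂P :=
      integral_sub (by exact hIq.add hIa) hIb
    have h4 : ∫ ω, (q ω + a ω) ∂P = (∫ ω, q ω ∂P) + ∫ ω, a ω ∂P := integral_add hIq hIa
    linarith [h1, h2, h3, h4, hEm]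
  -- independence: E[q W] = E q * E W
  have hWq : IndepFun W q P := by
    exact hindep.comp (measurable_snd.sub measurable_fst) measurable_id
  have hEqW : ∫ ω, q ω * W ω ∂P = (∫ ω, q ω ∂P) * ∫ ω, W ω ∂P := by
    exact hWq.symm.integral_fun_mul_eq_mul_integral hIq.aestronglyMeasurable hIW.aestronglyMeasurable
  have hEW : ∫ ω, W ω ∂P = (∫ ω, b ω ∂P) - ∫ ω, a ω ∂P := by
    have : ∫ ω, W ω ∂P = ∫ ω, (b ω - a ω) ∂P := rfl
    rw [this, integral_sub hIb hIa]
  have hEW2 : ∫ ω, W ω ^ 2 ∂P = (∫ ω, a ω ^ 2 ∂P) + ∫ ω, b ω ^ 2 ∂P := by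
    have h1 : ∫ ω, W ω ^ 2 ∂P = ∫ ω, (a ω ^ 2 + b ω ^ 2) ∂P := by
      refine integral_congr_ae ?_
      filter_upwards [hab] with ω h
      simp only [hW_def]
      linear_combination -2 * h
    rw [h1, integral_add ha2 hb2]
  -- second moment of L
  have hEL2 : ∫ ω, L ω ^ 2 ∂P
      = 2 * (∫ ω, q ω ∂P) * ((∫ ω, a ω ∂P) - ∫ ω, b ω ∂P)
        + ((∫ ω, a ω ^ 2 ∂P) + ∫ ω, b ω ^ 2 ∂P) := by
    have hx2e : ∫ ω, (q ω + a ω - b ω) ^ 2 ∂P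
        = (∫ ω, q ω ^ 2 ∂P) - 2 * ((∫ ω, q ω ∂P) * ∫ ω, W ω ∂P)
          + ((∫ ω, a ω ^ 2 ∂P) + ∫ ω, b ω ^ 2 ∂P) := by
      have e : ∫ ω, (q ω + a ω - b ω) ^ 2 ∂P
          = ∫ ω, (q ω ^ 2 - 2 * (q ω * W ω) + W ω ^ 2) ∂P := by
        refine integral_congr_ae (ae_of_all _ fun ω => ?_)
        simp only [hW_def]; ring
      have e1 : ∫ ω, (q ω ^ 2 - 2 * (q ω * W ω) + W ω ^ 2) ∂P
          = (∫ ω, (q ω ^ 2 - 2 * (q ω * W ω)) ∂P) + ∫ ω, W ω ^ 2 ∂P :=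
        integral_add (by exact hq2.sub (hqW.const_mul 2)) hW2
      have e2 : ∫ ω, (q ω ^ 2 - 2 * (q ω * W ω)) ∂P
          = (∫ ω, q ω ^ 2 ∂P) - ∫ ω, 2 * (q ω * W ω) ∂P :=
        integral_sub hq2 (by exact hqW.const_mul 2)
      have e3 : ∫ ω, 2 * (q ω * W ω) ∂P = 2 * ∫ ω, (q ω * W ω) ∂P := integral_const_mul 2 _
      rw [e]
      linarith [e1, e2, e3, hEqW, hEW2]
    have h1 : ∫ ω, m ω ^ 2 ∂P
        = (∫ ω, (q ω + a ω - b ω) ^ 2 ∂P) - ∫ ω, L ω ^ 2 ∂P := by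
      rw [← integral_sub hx2 hIL2]
      exact integral_congr_ae (ae_of_all _ fun ω => hmL2 ω)
    rw [hEm2, hx2e, hEW] at h1
    linarith
  -- the function f
  set f : ℝ → ℝ := fun t => ∫ ω, max (t - q ω) 0 ∂P with hf_def
  have hint1 : ∀ t : ℝ, Integrable (fun ω => max (t - q ω) 0) P := by
    intro t
    refine Integrable.mono' (integrable_const |t|)
      ((measurable_const.sub hq).max measurable_const).aestronglyMeasurable ?_
    filter_upwards [hq0] with ω h
    rw [Real.norm_eq_abs, abs_of_nonneg (le_max_right _ _)]
    refine max_le ?_ (abs_nonneg t)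
    have := le_abs_self t; linarith
  have hint2 : ∀ t : ℝ, Integrable (fun ω => (max (t - q ω) 0) ^ 2) P := by
    intro t
    refine Integrable.mono' (integrable_const (t ^ 2))
      (((measurable_const.sub hq).max measurable_const).pow_const 2).aestronglyMeasurable ?_
    filter_upwards [hq0] with ω h
    rw [Real.norm_eq_abs, abs_of_nonneg (by positivity)]
    have h1 : max (t - q ω) 0 ≤ |t| := by
      refine max_le ?_ (abs_nonneg t)
      have := le_abs_self t; linarith
    nlinarith [le_max_right (t - q ω) 0, sq_abs t]
  have hf0 : ∀ t, 0 ≤ f t := fun t => integral_nonneg fun ω => le_max_right _ _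
  have hfabs : ∀ t, |f t| ≤ |t| := by
    intro t
    rw [abs_of_nonneg (hf0 t)]
    have h1 : f t ≤ ∫ (_ : Ω), |t| ∂P := by
      refine integral_mono_ae (hint1 t) (integrable_const _) ?_
      filter_upwards [hq0] with ω h
      refine max_le ?_ (abs_nonneg t)
      have := le_abs_self t; linarith
    simpa using h1
  have hfzero : ∀ t : ℝ, t ≤ 0 → f t = 0 := by
    intro t ht
    have hz : (fun ω => max (t - q ω) 0) =ᵐ[P] fun _ => (0:ℝ) := by
      filter_upwards [hq0] with ω h
      exact max_eq_right (by linarith)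
    simp only [hf_def]
    rw [integral_congr_ae hz, integral_zero]
  have hfratio : ∀ s t : ℝ, 0 ≤ s → s ≤ t → f s * t ≤ f t * s := by
    intro s t hs hst
    have e1 : f s * t = ∫ ω, (max (s - q ω) 0 * t) ∂P := (integral_mul_const t _).symm
    have e2 : f t * s = ∫ ω, (max (t - q ω) 0 * s) ∂P := (integral_mul_const s _).symm
    rw [e1, e2]
    refine integral_mono_ae (by exact (hint1 s).mul_const t) (by exact (hint1 t).mul_const s) ?_
    filter_upwards [hq0] with ω h
    rcases le_total (q ω) s with h2 | h2
    · rw [max_eq_left (by linarith), max_eq_left (by linarith : (0:ℝ) ≤ t - q ω)]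
      nlinarith
    · rw [max_eq_right (by linarith : s - q ω ≤ 0)]
      have h3 : (0:ℝ) ≤ max (t - q ω) 0 := le_max_right _ _
      nlinarith
  have hflip : LipschitzWith 1 f := by
    refine LipschitzWith.of_dist_le_mul fun s t => ?_
    simp only [NNReal.coe_one, one_mul, Real.dist_eq]
    have e : f s - f t = ∫ ω, (max (s - q ω) 0 - max (t - q ω) 0) ∂P :=
      (integral_sub (hint1 s) (hint1 t)).symm
    rw [e]
    have h1 : |∫ ω, (max (s - q ω) 0 - max (t - q ω) 0) ∂P|
        ≤ ∫ ω, |max (s - q ω) 0 - max (t - q ω) 0| ∂P := by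
      simpa [Real.norm_eq_abs] using
        norm_integral_le_integral_norm (fun ω => max (s - q ω) 0 - max (t - q ω) 0) (μ := P)
    have h2 : ∫ ω, |max (s - q ω) 0 - max (t - q ω) 0| ∂P ≤ ∫ (_ : Ω), |s - t| ∂P := by
      refine integral_mono_ae (by exact ((hint1 s).sub (hint1 t)).abs) (integrable_const _)
        (ae_of_all _ fun ω => ?_)
      have h3 := abs_max_sub_max_le_abs (s - q ω) (t - q ω) 0
      have h4 : s - q ω - (t - q ω) = s - t := by ring
      rwa [h4] at h3
    have h5 : ∫ (_ : Ω), |s - t| ∂P = |s - t| := by simp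
    linarith
  have hfmeas : Measurable f := hflip.continuous.measurable
  -- independence of W and q as a product measure
  haveI : IsProbabilityMeasure (P.map q) := Measure.isProbabilityMeasure_map hq.aemeasurable
  haveI : IsProbabilityMeasure (P.map W) := Measure.isProbabilityMeasure_map hWmeas.aemeasurable
  have hmap : P.map (fun ω => (W ω, q ω)) = (P.map W).prod (P.map q) :=
    (indepFun_iff_map_prod_eq_prod_map_map hWmeas.aemeasurable hq.aemeasurable).1 hWq
  have hkmeas : Measurable (fun p : ℝ × ℝ => max (p.1 - p.2) 0) :=
    (measurable_fst.sub measurable_snd).max measurable_const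
  have hLk : Integrable (fun p : ℝ × ℝ => max (p.1 - p.2) 0) ((P.map W).prod (P.map q)) := by
    rw [← hmap]
    refine (integrable_map_measure hkmeas.aestronglyMeasurable
      (hWmeas.prodMk hq).aemeasurable).2 ?_
    exact hIL
  have hLk2 : Integrable (fun p : ℝ × ℝ => (max (p.1 - p.2) 0) ^ 2)
      ((P.map W).prod (P.map q)) := by
    rw [← hmap]
    refine (integrable_map_measure (hkmeas.pow_const 2).aestronglyMeasurable
      (hWmeas.prodMk hq).aemeasurable).2 ?_
    exact hIL2
  -- E[L] = E[f ∘ W]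
  have hfW : ∫ ω, L ω ∂P = ∫ ω, f (W ω) ∂P := by
    have s1 : ∫ ω, L ω ∂P
        = ∫ p, max (p.1 - p.2) 0 ∂((P.map W).prod (P.map q)) := by
      rw [← hmap,
        integral_map (hWmeas.prodMk hq).aemeasurable hkmeas.aestronglyMeasurable]
    have s2 : ∫ p, max (p.1 - p.2) 0 ∂((P.map W).prod (P.map q))
        = ∫ w, (∫ u, max (w - u) 0 ∂(P.map q)) ∂(P.map W) := integral_prod _ hLk
    have s3 : ∀ w : ℝ, ∫ u, max (w - u) 0 ∂(P.map q) = f w := by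
      intro w
      have hgm : Measurable (fun u : ℝ => max (w - u) 0) :=
        (measurable_const.sub measurable_id).max measurable_const
      rw [integral_map hq.aemeasurable hgm.aestronglyMeasurable]
    have s4 : ∫ w, (∫ u, max (w - u) 0 ∂(P.map q)) ∂(P.map W) = ∫ w, f w ∂(P.map W) := by
      exact integral_congr_ae (ae_of_all _ s3)
    have s5 : ∫ w, f w ∂(P.map W) = ∫ ω, f (W ω) ∂P :=
      integral_map hWmeas.aemeasurable hfmeas.aestronglyMeasurable
    rw [s1, s2, s4, s5]
  have hfWb : ∀ᵐ ω ∂P, f (W ω) = f (b ω) := by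
    filter_upwards [hab, ha0, hb0] with ω h1 h2 h3
    rcases mul_eq_zero.1 h1 with h4 | h4
    · have : W ω = b ω := by simp only [hW_def]; rw [h4]; ring
      rw [this]
    · have e1 : W ω = 0 - a ω := by simp only [hW_def]; rw [h4]
      rw [e1, h4, hfzero _ (by linarith), hfzero _ le_rfl]
  have hEF : ∫ ω, f (b ω) ∂P = (∫ ω, b ω ∂P) - ∫ ω, a ω ∂P := by
    rw [← hEL, hfW]
    exact (integral_congr_ae hfWb).symm
  -- E[L²] ≥ E[(f ∘ b)²]
  have hF2le : ∫ ω, (f (b ω)) ^ 2 ∂P ≤ ∫ ω, L ω ^ 2 ∂P := by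
    have s1 : ∫ ω, L ω ^ 2 ∂P
        = ∫ p, (max (p.1 - p.2) 0) ^ 2 ∂((P.map W).prod (P.map q)) := by
      rw [← hmap,
        integral_map (hWmeas.prodMk hq).aemeasurable (hkmeas.pow_const 2).aestronglyMeasurable]
    have s2 : ∫ p, (max (p.1 - p.2) 0) ^ 2 ∂((P.map W).prod (P.map q))
        = ∫ w, (∫ u, (max (w - u) 0) ^ 2 ∂(P.map q)) ∂(P.map W) := integral_prod _ hLk2
    have s3 : ∀ w : ℝ, ∫ u, (max (w - u) 0) ^ 2 ∂(P.map q)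
        = ∫ ω, (max (w - q ω) 0) ^ 2 ∂P := by
      intro w
      have hgm : Measurable (fun u : ℝ => (max (w - u) 0) ^ 2) :=
        ((measurable_const.sub measurable_id).max measurable_const).pow_const 2
      rw [integral_map hq.aemeasurable hgm.aestronglyMeasurable]
    have hjen : ∀ w : ℝ, (f w) ^ 2 ≤ ∫ ω, (max (w - q ω) 0) ^ 2 ∂P := fun w =>
      sq_int_le (hint1 w) (hint2 w)
    have hGint : Integrable (fun w => ∫ u, (max (w - u) 0) ^ 2 ∂(P.map q)) (P.map W) :=
      hLk2.integral_prod_left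
    have hWsq : Integrable (fun w : ℝ => w ^ 2) (P.map W) := by
      refine (integrable_map_measure (measurable_id.pow_const 2).aestronglyMeasurable
        hWmeas.aemeasurable).2 ?_
      exact hW2
    have hf2int : Integrable (fun w => (f w) ^ 2) (P.map W) := by
      refine Integrable.mono' hWsq ((hfmeas.pow_const 2).aestronglyMeasurable)
        (ae_of_all _ fun w => ?_)
      rw [Real.norm_eq_abs, abs_of_nonneg (sq_nonneg _)]
      nlinarith [hfabs w, abs_nonneg (f w), sq_abs w, sq_abs (f w)]
    have smono : ∫ w, (f w) ^ 2 ∂(P.map W)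
        ≤ ∫ w, (∫ u, (max (w - u) 0) ^ 2 ∂(P.map q)) ∂(P.map W) := by
      refine integral_mono_ae hf2int hGint (ae_of_all _ fun w => ?_)
      dsimp only
      rw [s3 w]; exact hjen w
    have s4 : ∫ w, (f w) ^ 2 ∂(P.map W) = ∫ ω, (f (W ω)) ^ 2 ∂P :=
      integral_map hWmeas.aemeasurable (hfmeas.pow_const 2).aestronglyMeasurable
    have s5 : ∫ ω, (f (W ω)) ^ 2 ∂P = ∫ ω, (f (b ω)) ^ 2 ∂P := by
      refine integral_congr_ae ?_
      filter_upwards [hfWb] with ω h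
      rw [h]
    rw [s1, s2]
    calc ∫ ω, (f (b ω)) ^ 2 ∂P = ∫ w, (f w) ^ 2 ∂(P.map W) := by rw [s4, s5]
      _ ≤ _ := smono
  -- integrability of f ∘ b and its square
  have hIF : Integrable (fun ω => f (b ω)) P := by
    refine Integrable.mono' hIb.abs (hfmeas.comp hb).aestronglyMeasurable
      (ae_of_all _ fun ω => ?_)
    rw [Real.norm_eq_abs]
    exact hfabs (b ω)
  have hIF2 : Integrable (fun ω => (f (b ω)) ^ 2) P := by
    refine Integrable.mono' hb2 ((hfmeas.comp hb).pow_const 2).aestronglyMeasurable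
      (ae_of_all _ fun ω => ?_)
    rw [Real.norm_eq_abs, abs_of_nonneg (sq_nonneg _)]
    nlinarith [hfabs (b ω), abs_nonneg (f (b ω)), sq_abs (b ω), sq_abs (f (b ω))]
  -- coordinates of the triple product are a.e. nonnegative
  have hb1P : ∀ᵐ ω ∂(P.prod (P.prod P)), 0 ≤ b ω.1 := by
    have h : (P.prod (P.prod P)).map Prod.fst = P := Measure.fst_prod
    have h0 : ∀ᵐ y ∂((P.prod (P.prod P)).map Prod.fst), 0 ≤ b y := by rw [h]; exact hb0
    exact ae_of_ae_map (p := fun y : Ω => 0 ≤ b y) measurable_fst.aemeasurable h0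
  have hsnd : ∀ᵐ ω ∂(P.prod (P.prod P)), (0 ≤ b ω.2.1 ∧ 0 ≤ b ω.2.2) := by
    have hpp : ∀ᵐ σ ∂(P.prod P), 0 ≤ b σ.1 ∧ 0 ≤ b σ.2 := by
      refine Filter.Eventually.and ?_ ?_
      · have h2 : (P.prod P).map Prod.fst = P := Measure.fst_prod
        have h0 : ∀ᵐ y ∂((P.prod P).map Prod.fst), 0 ≤ b y := by rw [h2]; exact hb0
        exact ae_of_ae_map (p := fun y : Ω => 0 ≤ b y) measurable_fst.aemeasurable h0
      · have h2 : (P.prod P).map Prod.snd = P := Measure.snd_prod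
        have h0 : ∀ᵐ y ∂((P.prod P).map Prod.snd), 0 ≤ b y := by rw [h2]; exact hb0
        exact ae_of_ae_map (p := fun y : Ω => 0 ≤ b y) measurable_snd.aemeasurable h0
    have h : (P.prod (P.prod P)).map Prod.snd = P.prod P := Measure.snd_prod
    have h0 : ∀ᵐ σ ∂((P.prod (P.prod P)).map Prod.snd), 0 ≤ b σ.1 ∧ 0 ≤ b σ.2 := by
      rw [h]; exact hpp
    exact ae_of_ae_map (p := fun σ : Ω × Ω => 0 ≤ b σ.1 ∧ 0 ≤ b σ.2)
      measurable_snd.aemeasurable h0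
  have hTae : ∀ᵐ ω ∂(P.prod (P.prod P)), 0 ≤ ((f (b ω.1)) ^ 2 * (b ω.2.1 * b ω.2.2) + b ω.1 * ((f (b ω.2.1)) ^ 2 * b ω.2.2) + b ω.1 * (b ω.2.1 * (f (b ω.2.2)) ^ 2)) - (f (b ω.1) * (f (b ω.2.1) * (b ω.2.2) ^ 2) + f (b ω.1) * ((b ω.2.1) ^ 2 * f (b ω.2.2)) + (b ω.1) ^ 2 * (f (b ω.2.1) * f (b ω.2.2))) := by
    filter_upwards [hb1P, hsnd] with ω h1 h2
    exact T_nonneg2 f hf0 hfratio h1 h2.1 h2.2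
  have i1 : ∫ ω, (f (b ω.1)) ^ 2 * (b ω.2.1 * b ω.2.2) ∂(P.prod (P.prod P)) = (∫ ω, (f (b ω)) ^ 2 ∂P) * ((∫ ω, b ω ∂P) * (∫ ω, b ω ∂P)) := by
    rw [integral_prod_mul (fun ω => (f (b ω)) ^ 2) (fun σ : Ω × Ω => b σ.1 * b σ.2),
      integral_prod_mul (fun ω => b ω) (fun ω => b ω)]
  have i2 : ∫ ω, b ω.1 * ((f (b ω.2.1)) ^ 2 * b ω.2.2) ∂(P.prod (P.prod P)) = (∫ ω, b ω ∂P) * ((∫ ω, (f (b ω)) ^ 2 ∂P) * (∫ ω, b ω ∂P)) := by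
    rw [integral_prod_mul (fun ω => b ω) (fun σ : Ω × Ω => (f (b σ.1)) ^ 2 * b σ.2),
      integral_prod_mul (fun ω => (f (b ω)) ^ 2) (fun ω => b ω)]
  have i3 : ∫ ω, b ω.1 * (b ω.2.1 * (f (b ω.2.2)) ^ 2) ∂(P.prod (P.prod P)) = (∫ ω, b ω ∂P) * ((∫ ω, b ω ∂P) * (∫ ω, (f (b ω)) ^ 2 ∂P)) := by
    rw [integral_prod_mul (fun ω => b ω) (fun σ : Ω × Ω => b σ.1 * (f (b σ.2)) ^ 2),
      integral_prod_mul (fun ω => b ω) (fun ω => (f (b ω)) ^ 2)]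
  have i4 : ∫ ω, f (b ω.1) * (f (b ω.2.1) * (b ω.2.2) ^ 2) ∂(P.prod (P.prod P)) = (∫ ω, f (b ω) ∂P) * ((∫ ω, f (b ω) ∂P) * (∫ ω, b ω ^ 2 ∂P)) := by
    rw [integral_prod_mul (fun ω => f (b ω)) (fun σ : Ω × Ω => f (b σ.1) * (b σ.2) ^ 2),
      integral_prod_mul (fun ω => f (b ω)) (fun ω => b ω ^ 2)]
  have i5 : ∫ ω, f (b ω.1) * ((b ω.2.1) ^ 2 * f (b ω.2.2)) ∂(P.prod (P.prod P)) = (∫ ω, f (b ω) ∂P) * ((∫ ω, b ω ^ 2 ∂P) * (∫ ω, f (b ω) ∂P)) := by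
    rw [integral_prod_mul (fun ω => f (b ω)) (fun σ : Ω × Ω => (b σ.1) ^ 2 * f (b σ.2)),
      integral_prod_mul (fun ω => b ω ^ 2) (fun ω => f (b ω))]
  have i6 : ∫ ω, (b ω.1) ^ 2 * (f (b ω.2.1) * f (b ω.2.2)) ∂(P.prod (P.prod P)) = (∫ ω, b ω ^ 2 ∂P) * ((∫ ω, f (b ω) ∂P) * (∫ ω, f (b ω) ∂P)) := by
    rw [integral_prod_mul (fun ω => b ω ^ 2) (fun σ : Ω × Ω => f (b σ.1) * f (b σ.2)),
      integral_prod_mul (fun ω => f (b ω)) (fun ω => f (b ω))]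
  have j1 : Integrable (fun ω => (f (b ω.1)) ^ 2 * (b ω.2.1 * b ω.2.2)) (P.prod (P.prod P)) := by
    exact hIF2.mul_prod (hIb.mul_prod hIb)
  have j2 : Integrable (fun ω => b ω.1 * ((f (b ω.2.1)) ^ 2 * b ω.2.2)) (P.prod (P.prod P)) := by
    exact hIb.mul_prod (hIF2.mul_prod hIb)
  have j3 : Integrable (fun ω => b ω.1 * (b ω.2.1 * (f (b ω.2.2)) ^ 2)) (P.prod (P.prod P)) := by
    exact hIb.mul_prod (hIb.mul_prod hIF2)
  have j4 : Integrable (fun ω => f (b ω.1) * (f (b ω.2.1) * (b ω.2.2) ^ 2)) (P.prod (P.prod P)) := by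
    exact hIF.mul_prod (hIF.mul_prod hb2)
  have j5 : Integrable (fun ω => f (b ω.1) * ((b ω.2.1) ^ 2 * f (b ω.2.2))) (P.prod (P.prod P)) := by
    exact hIF.mul_prod (hb2.mul_prod hIF)
  have j6 : Integrable (fun ω => (b ω.1) ^ 2 * (f (b ω.2.1) * f (b ω.2.2))) (P.prod (P.prod P)) := by
    exact hb2.mul_prod (hIF.mul_prod hIF)
  have key4 : (∫ ω, f (b ω) ∂P) ^ 2 * (∫ ω, b ω ^ 2 ∂P) ≤ (∫ ω, (f (b ω)) ^ 2 ∂P) * (∫ ω, b ω ∂P) ^ 2 := by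
    have hnn : 0 ≤ ∫ ω, (((f (b ω.1)) ^ 2 * (b ω.2.1 * b ω.2.2) + b ω.1 * ((f (b ω.2.1)) ^ 2 * b ω.2.2) + b ω.1 * (b ω.2.1 * (f (b ω.2.2)) ^ 2)) - (f (b ω.1) * (f (b ω.2.1) * (b ω.2.2) ^ 2) + f (b ω.1) * ((b ω.2.1) ^ 2 * f (b ω.2.2)) + (b ω.1) ^ 2 * (f (b ω.2.1) * f (b ω.2.2)))) ∂(P.prod (P.prod P)) := integral_nonneg_of_ae hTae
    have esub : ∫ ω, (((f (b ω.1)) ^ 2 * (b ω.2.1 * b ω.2.2) + b ω.1 * ((f (b ω.2.1)) ^ 2 * b ω.2.2) + b ω.1 * (b ω.2.1 * (f (b ω.2.2)) ^ 2)) - (f (b ω.1) * (f (b ω.2.1) * (b ω.2.2) ^ 2) + f (b ω.1) * ((b ω.2.1) ^ 2 * f (b ω.2.2)) + (b ω.1) ^ 2 * (f (b ω.2.1) * f (b ω.2.2)))) ∂(P.prod (P.prod P))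
        = (∫ ω, ((f (b ω.1)) ^ 2 * (b ω.2.1 * b ω.2.2) + b ω.1 * ((f (b ω.2.1)) ^ 2 * b ω.2.2) + b ω.1 * (b ω.2.1 * (f (b ω.2.2)) ^ 2)) ∂(P.prod (P.prod P))) - ∫ ω, (f (b ω.1) * (f (b ω.2.1) * (b ω.2.2) ^ 2) + f (b ω.1) * ((b ω.2.1) ^ 2 * f (b ω.2.2)) + (b ω.1) ^ 2 * (f (b ω.2.1) * f (b ω.2.2))) ∂(P.prod (P.prod P)) :=
      integral_sub (by exact (j1.add j2).add j3) (by exact (j4.add j5).add j6)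
    have et1 : ∫ ω, ((f (b ω.1)) ^ 2 * (b ω.2.1 * b ω.2.2) + b ω.1 * ((f (b ω.2.1)) ^ 2 * b ω.2.2) + b ω.1 * (b ω.2.1 * (f (b ω.2.2)) ^ 2)) ∂(P.prod (P.prod P))
        = (∫ ω, ((f (b ω.1)) ^ 2 * (b ω.2.1 * b ω.2.2) + b ω.1 * ((f (b ω.2.1)) ^ 2 * b ω.2.2)) ∂(P.prod (P.prod P))) + ∫ ω, b ω.1 * (b ω.2.1 * (f (b ω.2.2)) ^ 2) ∂(P.prod (P.prod P)) :=
      integral_add (by exact j1.add j2) j3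
    have et2 : ∫ ω, ((f (b ω.1)) ^ 2 * (b ω.2.1 * b ω.2.2) + b ω.1 * ((f (b ω.2.1)) ^ 2 * b ω.2.2)) ∂(P.prod (P.prod P)) = (∫ ω, (f (b ω.1)) ^ 2 * (b ω.2.1 * b ω.2.2) ∂(P.prod (P.prod P))) + ∫ ω, b ω.1 * ((f (b ω.2.1)) ^ 2 * b ω.2.2) ∂(P.prod (P.prod P)) :=
      integral_add j1 j2
    have es1 : ∫ ω, (f (b ω.1) * (f (b ω.2.1) * (b ω.2.2) ^ 2) + f (b ω.1) * ((b ω.2.1) ^ 2 * f (b ω.2.2)) + (b ω.1) ^ 2 * (f (b ω.2.1) * f (b ω.2.2))) ∂(P.prod (P.prod P))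
        = (∫ ω, (f (b ω.1) * (f (b ω.2.1) * (b ω.2.2) ^ 2) + f (b ω.1) * ((b ω.2.1) ^ 2 * f (b ω.2.2))) ∂(P.prod (P.prod P))) + ∫ ω, (b ω.1) ^ 2 * (f (b ω.2.1) * f (b ω.2.2)) ∂(P.prod (P.prod P)) :=
      integral_add (by exact j4.add j5) j6
    have es2 : ∫ ω, (f (b ω.1) * (f (b ω.2.1) * (b ω.2.2) ^ 2) + f (b ω.1) * ((b ω.2.1) ^ 2 * f (b ω.2.2))) ∂(P.prod (P.prod P)) = (∫ ω, f (b ω.1) * (f (b ω.2.1) * (b ω.2.2) ^ 2) ∂(P.prod (P.prod P))) + ∫ ω, f (b ω.1) * ((b ω.2.1) ^ 2 * f (b ω.2.2)) ∂(P.prod (P.prod P)) :=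
      integral_add j4 j5
    rw [esub, et1, et2, es1, es2, i1, i2, i3, i4, i5, i6] at hnn
    nlinarith [hnn]
  -- final arithmetic
  have hEB : 0 < (∫ ω, b ω ∂P) := lt_trans hEa hEab
  have hΔ : 0 < (∫ ω, b ω ∂P) - (∫ ω, a ω ∂P) := sub_pos.2 hEab
  have final_ineq : ((∫ ω, b ω ∂P) - (∫ ω, a ω ∂P)) ^ 2 * (∫ ω, b ω ^ 2 ∂P)
      ≤ ((∫ ω, a ω ^ 2 ∂P) + (∫ ω, b ω ^ 2 ∂P) - 2 * (∫ ω, q ω ∂P) * ((∫ ω, b ω ∂P) - (∫ ω, a ω ∂P))) * (∫ ω, b ω ∂P) ^ 2 := by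
    have k1 : ((∫ ω, b ω ∂P) - (∫ ω, a ω ∂P)) ^ 2 * (∫ ω, b ω ^ 2 ∂P) ≤ (∫ ω, (f (b ω)) ^ 2 ∂P) * (∫ ω, b ω ∂P) ^ 2 := by
      rw [← hEF]; exact key4
    have k2 : (∫ ω, (f (b ω)) ^ 2 ∂P) * (∫ ω, b ω ∂P) ^ 2 ≤ (∫ ω, L ω ^ 2 ∂P) * (∫ ω, b ω ∂P) ^ 2 :=
      mul_le_mul_of_nonneg_right hF2le (by positivity)
    have k3 : (∫ ω, L ω ^ 2 ∂P) * (∫ ω, b ω ∂P) ^ 2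
        = ((∫ ω, a ω ^ 2 ∂P) + (∫ ω, b ω ^ 2 ∂P)
            - 2 * (∫ ω, q ω ∂P) * ((∫ ω, b ω ∂P) - (∫ ω, a ω ∂P))) * (∫ ω, b ω ∂P) ^ 2 := by
      rw [hEL2]; ring
    linarith [k1, k2, k3]
  have goal1 : (∫ ω, q ω ∂P) ≤ 1 / 2 * ((∫ ω, a ω ^ 2 ∂P) + ξ * (2 - ξ) * (∫ ω, b ω ^ 2 ∂P)) / ((∫ ω, b ω ∂P) - (∫ ω, a ω ∂P)) := by
    rw [hξ, le_div_iff₀ hΔ]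
    have expand : 1 / 2 * ((∫ ω, a ω ^ 2 ∂P) + (∫ ω, a ω ∂P) / (∫ ω, b ω ∂P) * (2 - (∫ ω, a ω ∂P) / (∫ ω, b ω ∂P)) * (∫ ω, b ω ^ 2 ∂P)) * (∫ ω, b ω ∂P) ^ 2
        = 1 / 2 * ((∫ ω, a ω ^ 2 ∂P) * (∫ ω, b ω ∂P) ^ 2 + (2 * (∫ ω, a ω ∂P) * (∫ ω, b ω ∂P) - (∫ ω, a ω ∂P) ^ 2) * (∫ ω, b ω ^ 2 ∂P)) := by
      field_simp
    have h4 : ((∫ ω, q ω ∂P) * ((∫ ω, b ω ∂P) - (∫ ω, a ω ∂P))) * (∫ ω, b ω ∂P) ^ 2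
        ≤ (1 / 2 * ((∫ ω, a ω ^ 2 ∂P) + (∫ ω, a ω ∂P) / (∫ ω, b ω ∂P) * (2 - (∫ ω, a ω ∂P) / (∫ ω, b ω ∂P)) * (∫ ω, b ω ^ 2 ∂P))) * (∫ ω, b ω ∂P) ^ 2 := by
      rw [expand]
      linarith [final_ineq]
    exact le_of_mul_le_mul_right h4 (by positivity)
  refine ⟨goal1, ?_⟩
  calc (∫ ω, q ω ∂P) / (∫ ω, a ω ∂P) = (∫ ω, q ω ∂P) * (1 / (∫ ω, a ω ∂P)) := by ring
    _ ≤ (1 / 2 * ((∫ ω, a ω ^ 2 ∂P) + ξ * (2 - ξ) * (∫ ω, b ω ^ 2 ∂P)) / ((∫ ω, b ω ∂P) - (∫ ω, a ω ∂P))) * (1 / (∫ ω, a ω ∂P)) :=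
      mul_le_mul_of_nonneg_right goal1 (by positivity)
    _ = 1 / 2 * (1 / (∫ ω, a ω ∂P)) * ((∫ ω, a ω ^ 2 ∂P) + ξ * (2 - ξ) * (∫ ω, b ω ^ 2 ∂P)) / ((∫ ω, b ω ∂P) - (∫ ω, a ω ∂P)) := by ring
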